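/- arXiv:1401.4255 — 2 statements merged into one kernel-verified Lean document; each statement's English description precedes it below -/
import Mathlib

section
/- For all integers n ≥ k ≥ 1, the Bell polynomial of the second kind satisfies B_{n,k}(1/2, 1/3, …, 1/(n-k+2)) = (n!/(n+k)!) · ∑_{i=0}^{k} (-1)^{k-i} · C(n+k, k-i) · S(n+i, i), where S denotes the Stirling numbers of the second kind. -/
open Finset

/-- Bell polynomials of the second kind: `bellB n k x` is
`B_{n,k}(x 1, x 2, …, x (n-k+1))`, summing over sequences of nonnegative
integers `ℓ 1, …` with `∑ i * ℓ i = n` and `∑ ℓ i = k`. -/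
noncomputable def bellB (n k : ℕ) (x : ℕ → ℝ) : ℝ :=
  ∑ ℓ : Fin (n + 1) → Fin (n + 1),
    if (ℓ 0 : ℕ) = 0 ∧ (∑ i : Fin (n + 1), (i : ℕ) * (ℓ i : ℕ)) = n ∧ (∑ i : Fin (n + 1), (ℓ i : ℕ)) = k then
      (n.factorial : ℝ) / (∏ i : Fin (n + 1), ((ℓ i : ℕ).factorial : ℝ)) *
        ∏ i : Fin (n + 1), (x (i : ℕ) / ((i : ℕ).factorial : ℝ)) ^ (ℓ i : ℕ)
    else 0

/-- Stirling numbers of the second kind (real-valued), with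
`stirlingS 0 0 = 1` and `stirlingS n 0 = 0` for `n ≥ 1`. -/
noncomputable def stirlingS (n k : ℕ) : ℝ :=
  (1 / (k.factorial : ℝ)) *
    ∑ l ∈ Finset.range (k + 1), (-1 : ℝ) ^ (k - l) * (k.choose l) * (l : ℝ) ^ n


section Aux
open PowerSeries

lemma coeff_exp_sub_one_pow (m i : ℕ) :
    (coeff m) ((exp ℝ - 1) ^ i) = (i.factorial : ℝ) * stirlingS m i / (m.factorial : ℝ) := by
  have hfac : (i.factorial : ℝ) ≠ 0 := by exact_mod_cast i.factorial_ne_zero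
  rw [sub_pow, map_sum]
  have key : ∀ l ∈ Finset.range (i+1),
      (coeff m) ((-1) ^ (l + i) * exp ℝ ^ l * 1 ^ (i - l) * ((i.choose l : ℕ) : ℝ⟦X⟧))
        = (-1 : ℝ) ^ (i - l) * (i.choose l) * (l : ℝ) ^ m / (m.factorial : ℝ) := by
    intro l hl
    rw [mem_range] at hl
    have h2 : (-1:ℝ)^(l+i) = (-1)^(i-l) := by
      rw [show l + i = (i - l) + 2*l by omega, pow_add]
      simp [pow_mul]
    have hC : ((-1:ℝ⟦X⟧) ^ (l + i) * exp ℝ ^ l * 1 ^ (i - l) * ((i.choose l : ℕ) : ℝ⟦X⟧))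
        = C ((-1 : ℝ) ^ (i - l) * (i.choose l)) * exp ℝ ^ l := by
      rw [map_mul, map_pow, map_neg, map_one, map_natCast,
        show ((-1:ℝ⟦X⟧))^(i-l) = (-1)^(l+i) by
          rw [show l + i = (i - l) + 2*l by omega, pow_add]; simp [pow_mul]]
      ring
    rw [hC, PowerSeries.coeff_C_mul, exp_pow_eq_rescale_exp, coeff_rescale, coeff_exp]
    have h1 : (algebraMap ℚ ℝ) (1 / m.factorial) = 1 / (m.factorial : ℝ) := by
      push_cast; simp
    rw [h1]; ring
  rw [Finset.sum_congr rfl key, stirlingS, ← Finset.sum_div]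
  field_simp


lemma coeff_mul_lowzero {N : ℕ} {R : ℝ⟦X⟧} (h : ∀ j ≤ N, coeff j R = 0)
    (S : ℝ⟦X⟧) : ∀ j ≤ N, coeff j (R * S) = 0 := by
  intro j hj
  rw [coeff_mul]
  refine Finset.sum_eq_zero fun p hp => ?_
  rw [Finset.HasAntidiagonal.mem_antidiagonal] at hp
  rw [h p.1 (by omega), zero_mul]

lemma coeff_pow_add_lowzero (N k : ℕ) (P R : ℝ⟦X⟧) (h : ∀ j ≤ N, coeff j R = 0) :
    coeff N ((P + R) ^ k) = coeff N (P ^ k) := by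
  rw [add_pow, map_sum]
  rw [Finset.sum_eq_single k]
  · simp
  · intro i hi hik
    rw [Finset.mem_range] at hi
    have hik' : k - i = (k - i - 1) + 1 := by omega
    have : P ^ i * R ^ (k - i) * ((k.choose i : ℕ) : ℝ⟦X⟧)
        = R * (R ^ (k - i - 1) * P ^ i * ((k.choose i : ℕ) : ℝ⟦X⟧)) := by
      conv_lhs => rw [hik']
      rw [pow_succ]; ring
    rw [this, coeff_mul_lowzero h _ N le_rfl]
  · intro h; exact absurd (Finset.self_mem_range_succ k) h

noncomputable def Ptr (N : ℕ) : ℝ⟦X⟧ := ∑ j ∈ Finset.Icc 2 N, C (1 / (j.factorial : ℝ)) * X ^ j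

lemma coeff_Ptr (N j : ℕ) :
    coeff j (Ptr N) = if j ∈ Finset.Icc 2 N then (1 / (j.factorial : ℝ)) else 0 := by
  rw [Ptr, map_sum]
  rw [Finset.sum_congr rfl (fun i _ => by
    rw [PowerSeries.coeff_C_mul, PowerSeries.coeff_X_pow])]
  simp only [mul_ite, mul_one, mul_zero]
  rw [Finset.sum_ite_eq (Finset.Icc 2 N) j (fun j => 1 / (j.factorial : ℝ))]

lemma coeff_exp_sub (j : ℕ) (hj : 2 ≤ j) :
    coeff j (exp ℝ - 1 - X) = 1 / (j.factorial : ℝ) := by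
  rw [map_sub, map_sub, coeff_exp, PowerSeries.coeff_one, PowerSeries.coeff_X,
    if_neg (by omega), if_neg (by omega)]
  push_cast; simp

lemma key_trunc (N k : ℕ) (hN : 1 ≤ N) :
    coeff N ((exp ℝ - 1 - X) ^ k) = coeff N ((Ptr N) ^ k) := by
  have hdec : exp ℝ - 1 - X = Ptr N + (exp ℝ - 1 - X - Ptr N) := by ring
  rw [hdec, coeff_pow_add_lowzero]
  intro j hj
  rw [map_sub, coeff_Ptr]
  by_cases h2 : 2 ≤ j
  · rw [if_pos (Finset.mem_Icc.2 ⟨h2, hj⟩), coeff_exp_sub j h2, sub_self]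
  · interval_cases j <;>
      simp [coeff_exp, PowerSeries.coeff_one, PowerSeries.coeff_X, map_sub]

lemma coeff_G_pow (n k : ℕ) :
    coeff (n + k) ((exp ℝ - 1 - X) ^ k)
      = ∑ i ∈ Finset.range (k + 1), (k.choose i : ℝ) * (-1) ^ (k - i)
          * (i.factorial : ℝ) * stirlingS (n + i) i / ((n + i).factorial : ℝ) := by
  rw [show exp ℝ - 1 - X = (exp ℝ - 1) + (-X) by ring, add_pow, map_sum]
  refine Finset.sum_congr rfl fun i hi => ?_
  rw [Finset.mem_range] at hi
  have hterm : (exp ℝ - 1) ^ i * (-X) ^ (k - i) * ((k.choose i : ℕ) : ℝ⟦X⟧)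
      = C ((-1 : ℝ) ^ (k - i) * (k.choose i)) * ((exp ℝ - 1) ^ i * X ^ (k - i)) := by
    rw [map_mul, map_pow, map_neg, map_one, map_natCast, neg_pow]
    ring
  rw [hterm, PowerSeries.coeff_C_mul, PowerSeries.coeff_mul_X_pow',
    if_pos (show k - i ≤ n + k by omega),
    show n + k - (k - i) = n + i by omega, coeff_exp_sub_one_pow]
  ring

lemma coeff_Ptr_pow (N k : ℕ) :
    coeff N ((Ptr N) ^ k)
      = ∑ g ∈ piAntidiag (Finset.Icc 2 N) k,
          if (∑ j ∈ Finset.Icc 2 N, j * g j) = N then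
            (Nat.multinomial (Finset.Icc 2 N) g : ℝ)
              * ∏ j ∈ Finset.Icc 2 N, (1 / (j.factorial : ℝ)) ^ (g j)
          else 0 := by
  rw [Ptr, Finset.sum_pow_eq_sum_piAntidiag, map_sum]
  refine Finset.sum_congr rfl fun g hg => ?_
  have hprod : ∏ j ∈ Finset.Icc 2 N, (C (1 / (j.factorial : ℝ)) * X ^ j) ^ (g j)
      = C (∏ j ∈ Finset.Icc 2 N, (1 / (j.factorial : ℝ)) ^ (g j))
        * X ^ (∑ j ∈ Finset.Icc 2 N, j * g j) := by
    calc ∏ j ∈ Finset.Icc 2 N, (C (1 / (j.factorial : ℝ)) * X ^ j) ^ (g j)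
        = ∏ j ∈ Finset.Icc 2 N, (C ((1 / (j.factorial : ℝ)) ^ (g j)) * X ^ (j * g j)) := by
          refine Finset.prod_congr rfl fun j _ => ?_
          rw [mul_pow, ← map_pow, ← pow_mul, mul_comm j (g j)]
      _ = _ := by
          rw [Finset.prod_mul_distrib, ← map_prod, Finset.prod_pow_eq_pow_sum]
  rw [hprod, show ((Nat.multinomial (Finset.Icc 2 N) g : ℕ) : ℝ⟦X⟧)
      = C (Nat.multinomial (Finset.Icc 2 N) g : ℝ) by rw [map_natCast],
    ← mul_assoc, ← map_mul, PowerSeries.coeff_C_mul, PowerSeries.coeff_X_pow]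
  by_cases h : (∑ j ∈ Finset.Icc 2 N, j * g j) = N
  · rw [if_pos h, if_pos h.symm, mul_one]
  · rw [if_neg h, if_neg (fun hh => h hh.symm), mul_zero]

lemma transfer_prod {M : Type*} [CommMonoid M] (n N : ℕ) (hnN : n + 1 ≤ N)
    (L : ℕ → ℕ) (hL0' : L 0 = 0) (hLhigh : ∀ i, n < i → L i = 0)
    (F : ℕ → ℕ → M) (hF : ∀ j, F j 0 = 1) :
    ∏ j ∈ Finset.Icc 2 N, F j (if 1 ≤ j then L (j - 1) else 0)
      = ∏ i ∈ Finset.range (n + 1), F (i + 1) (L i) := by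
  have h1 : ∏ j ∈ Finset.Icc 2 N, F j (if 1 ≤ j then L (j - 1) else 0)
      = ∏ j ∈ Finset.Icc 1 N, F j (if 1 ≤ j then L (j - 1) else 0) := by
    refine Finset.prod_subset (Finset.Icc_subset_Icc_left (by omega)) ?_
    intro j hj hj2
    rw [Finset.mem_Icc] at hj; rw [Finset.mem_Icc] at hj2
    have : j = 1 := by omega
    subst this
    simp [hL0', hF]
  have h2 : ∏ j ∈ Finset.Icc 1 (n + 1), F j (if 1 ≤ j then L (j - 1) else 0)
      = ∏ j ∈ Finset.Icc 1 N, F j (if 1 ≤ j then L (j - 1) else 0) := by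
    refine Finset.prod_subset (Finset.Icc_subset_Icc_right (by omega)) ?_
    intro j hj hj2
    rw [Finset.mem_Icc] at hj; rw [Finset.mem_Icc] at hj2
    rw [if_pos (by omega), hLhigh (j - 1) (by omega), hF]
  rw [h1, ← h2]
  refine Finset.prod_nbij' (fun j => j - 1) (fun i => i + 1) ?_ ?_ ?_ ?_ ?_
  · intro j hj; rw [Finset.mem_Icc] at hj; rw [Finset.mem_range]; omega
  · intro i hi; rw [Finset.mem_range] at hi; rw [Finset.mem_Icc]; omega
  · intro j hj; rw [Finset.mem_Icc] at hj; omega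
  · intro i _; omega
  · intro j hj; rw [Finset.mem_Icc] at hj
    rw [if_pos (by omega), show j - 1 + 1 = j by omega]

lemma transfer_sum (n N : ℕ) (hnN : n + 1 ≤ N)
    (L : ℕ → ℕ) (hL0' : L 0 = 0) (hLhigh : ∀ i, n < i → L i = 0)
    (F : ℕ → ℕ → ℕ) (hF : ∀ j, F j 0 = 0) :
    ∑ j ∈ Finset.Icc 2 N, F j (if 1 ≤ j then L (j - 1) else 0)
      = ∑ i ∈ Finset.range (n + 1), F (i + 1) (L i) := by
  have := transfer_prod (M := Multiplicative ℕ) n N hnN L hL0' hLhigh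
    (fun j m => Multiplicative.ofAdd (F j m)) (fun j => by simp [hF])
  rw [← ofAdd_sum, ← ofAdd_sum] at this
  exact Multiplicative.ofAdd.injective this

lemma bridge (n k : ℕ) (hk : 1 ≤ k) (hkn : k ≤ n) :
    bellB n k (fun i => 1 / ((i : ℝ) + 1))
      = (n.factorial : ℝ) / (k.factorial : ℝ) *
        ∑ g ∈ piAntidiag (Finset.Icc 2 (n + k)) k,
          if (∑ j ∈ Finset.Icc 2 (n + k), j * g j) = n + k then
            (Nat.multinomial (Finset.Icc 2 (n + k)) g : ℝ)
              * ∏ j ∈ Finset.Icc 2 (n + k), (1 / (j.factorial : ℝ)) ^ (g j)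
          else 0 := by
  have hnN : n + 1 ≤ n + k := by omega
  rw [bellB, Finset.mul_sum]
  simp only [mul_ite, mul_zero]
  rw [← Finset.sum_filter, ← Finset.sum_filter]
  set N := n + k with hN
  refine Finset.sum_nbij'
    (i := fun ℓ (j : ℕ) => if 1 ≤ j then (if h : j - 1 < n + 1 then (ℓ ⟨j - 1, h⟩ : ℕ) else 0) else 0)
    (j := fun g (i : Fin (n + 1)) => (⟨min (g ((i : ℕ) + 1)) n, Nat.lt_succ_of_le (min_le_right _ _)⟩ : Fin (n + 1)))
    ?_ ?_ ?_ ?_ ?_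
  · -- forward membership
    intro ℓ hℓ
    rw [Finset.mem_filter] at hℓ
    obtain ⟨-, h0, hw, hs⟩ := hℓ
    set L : ℕ → ℕ := fun i => if h : i < n + 1 then (ℓ ⟨i, h⟩ : ℕ) else 0 with hLdef
    have hL0 : L 0 = 0 := by simp [hLdef, h0]
    have hLhigh : ∀ i, n < i → L i = 0 := fun i hi => by simp [hLdef]; omega
    have hLval : ∀ i : Fin (n + 1), L (i : ℕ) = (ℓ i : ℕ) := fun i => by
      simp [hLdef, i.isLt]; intro h; have := i.isLt; omega
    rw [Finset.mem_filter, mem_piAntidiag]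
    refine ⟨⟨?_, ?_⟩, ?_⟩
    · rw [transfer_sum n N hnN L hL0 hLhigh (fun _ m => m) (fun _ => rfl)]
      rw [← Fin.sum_univ_eq_sum_range (fun i => L i) (n + 1)]
      rw [Finset.sum_congr rfl fun i _ => hLval i, hs]
    · intro j hj
      rw [Finset.mem_Icc]
      by_contra hnot
      apply hj
      split_ifs with h1 h2
      · have hj1 : j = 1 := by omega
        subst hj1
        have : (⟨1 - 1, h2⟩ : Fin (n + 1)) = 0 := rfl
        rw [this, h0]
      · rfl
      · rfl
    · rw [transfer_sum n N hnN L hL0 hLhigh (fun j m => j * m) (fun _ => mul_zero _)]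
      rw [← Fin.sum_univ_eq_sum_range (fun i => (i + 1) * L i) (n + 1)]
      have : ∀ i : Fin (n + 1), ((i : ℕ) + 1) * L (i : ℕ) = (i : ℕ) * (ℓ i : ℕ) + (ℓ i : ℕ) := by
        intro i; rw [hLval i]; ring
      rw [Finset.sum_congr rfl fun i _ => this i, Finset.sum_add_distrib, hw, hs]
  · -- backward membership
    intro g hg
    rw [Finset.mem_filter, mem_piAntidiag] at hg
    obtain ⟨⟨hsum, hsupp⟩, hw⟩ := hg
    have hg0 : ∀ j, j ∉ Finset.Icc 2 N → g j = 0 := by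
      intro j hj; by_contra h; exact hj (hsupp j h)
    have hgle : ∀ j, g j ≤ n := by
      intro j
      by_cases hj : j ∈ Finset.Icc 2 N
      · exact le_trans (le_trans (Finset.single_le_sum (fun _ _ => Nat.zero_le _) hj) hsum.le) hkn
      · rw [hg0 j hj]; exact Nat.zero_le _
    have hghigh : ∀ j, n + 1 < j → g j = 0 := by
      intro j hjn
      by_contra h0
      have hj' : j ∈ Finset.Icc 2 N := hsupp j h0
      have e1 : (j * g j) + ∑ j' ∈ (Finset.Icc 2 N).erase j, j' * g j'
          = ∑ j' ∈ Finset.Icc 2 N, j' * g j' :=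
        Finset.add_sum_erase _ (fun x => x * g x) hj'
      have e2 : g j + ∑ j' ∈ (Finset.Icc 2 N).erase j, g j'
          = ∑ j' ∈ Finset.Icc 2 N, g j' :=
        Finset.add_sum_erase _ g hj'
      rw [hw] at e1
      rw [show (Finset.Icc 2 N).sum g = k from hsum] at e2
      have e3 : 2 * ∑ j' ∈ (Finset.Icc 2 N).erase j, g j'
          ≤ ∑ j' ∈ (Finset.Icc 2 N).erase j, j' * g j' := by
        rw [Finset.mul_sum]
        refine Finset.sum_le_sum fun j' hj'' => ?_
        have := (Finset.mem_Icc.1 (Finset.mem_of_mem_erase hj'')).1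
        exact Nat.mul_le_mul_right _ this
      have e4 : (n + 2) * g j ≤ j * g j := Nat.mul_le_mul_right _ (by omega)
      have e5 : (n + 2) * g j = n * g j + 2 * g j := by ring
      have e6 : n ≤ n * g j := Nat.le_mul_of_pos_right n (Nat.pos_of_ne_zero h0)
      omega
    have hbval : ∀ i : Fin (n + 1), min (g ((i : ℕ) + 1)) n = g ((i : ℕ) + 1) :=
      fun i => min_eq_left (hgle _)
    set L : ℕ → ℕ := fun i => g (i + 1) with hLdef
    have hL0 : L 0 = 0 := hg0 1 (by simp)
    have hLhigh : ∀ i, n < i → L i = 0 := fun i hi => hghigh (i + 1) (by omega)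
    have key : ∀ F : ℕ → ℕ → ℕ, (∀ j, F j 0 = 0) →
        ∑ j ∈ Finset.Icc 2 N, F j (g j) = ∑ i ∈ Finset.range (n + 1), F (i + 1) (L i) := by
      intro F hF
      rw [← transfer_sum n N hnN L hL0 hLhigh F hF]
      refine Finset.sum_congr rfl fun j hj => ?_
      rw [Finset.mem_Icc] at hj
      rw [if_pos (by omega), hLdef]
      dsimp only
      rw [show j - 1 + 1 = j by omega]
    refine Finset.mem_filter.mpr ⟨Finset.mem_univ _, ?_, ?_, ?_⟩
    · simpa using (Nat.min_eq_left (hgle 1)).trans hL0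
    · have h1 := key (fun j m => j * m) (fun _ => mul_zero _)
      have h2 := key (fun _ m => m) (fun _ => rfl)
      rw [hw] at h1; rw [hsum] at h2
      rw [← Fin.sum_univ_eq_sum_range (fun i => (i + 1) * L i) (n + 1)] at h1
      rw [← Fin.sum_univ_eq_sum_range (fun i => L i) (n + 1)] at h2
      have : ∀ i : Fin (n + 1),
          ((⟨min (g ((i : ℕ) + 1)) n, Nat.lt_succ_of_le (min_le_right _ _)⟩ : Fin (n + 1)) : ℕ)
            = L (i : ℕ) := fun i => hbval i
      calc ∑ i : Fin (n + 1), (i : ℕ) *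
            ((⟨min (g ((i : ℕ) + 1)) n, Nat.lt_succ_of_le (min_le_right _ _)⟩ : Fin (n + 1)) : ℕ)
          = ∑ i : Fin (n + 1), (i : ℕ) * L (i : ℕ) := by
            exact Finset.sum_congr rfl fun i _ => by rw [this i]
        _ = n := by
            have hsplit : ∑ i : Fin (n + 1), ((i : ℕ) + 1) * L (i : ℕ)
                = (∑ i : Fin (n + 1), (i : ℕ) * L (i : ℕ)) + ∑ i : Fin (n + 1), L (i : ℕ) := by
              rw [← Finset.sum_add_distrib]
              exact Finset.sum_congr rfl fun i _ => by ring
            omega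
    · have h2 := key (fun _ m => m) (fun _ => rfl)
      rw [hsum] at h2
      rw [← Fin.sum_univ_eq_sum_range (fun i => L i) (n + 1)] at h2
      calc ∑ i : Fin (n + 1),
            ((⟨min (g ((i : ℕ) + 1)) n, Nat.lt_succ_of_le (min_le_right _ _)⟩ : Fin (n + 1)) : ℕ)
          = ∑ i : Fin (n + 1), L (i : ℕ) := Finset.sum_congr rfl fun i _ => hbval i
        _ = k := h2.symm
  · -- left inverse
    intro ℓ hℓ
    funext i
    ext
    dsimp only
    rw [if_pos (by omega : 1 ≤ (i : ℕ) + 1)]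
    rw [dif_pos (by omega : (i : ℕ) + 1 - 1 < n + 1)]
    have : (⟨(i : ℕ) + 1 - 1, by omega⟩ : Fin (n + 1)) = i := by ext; simp
    rw [this]
    exact min_eq_left (by omega)
  · -- right inverse
    intro g hg
    rw [Finset.mem_filter, mem_piAntidiag] at hg
    obtain ⟨⟨hsum, hsupp⟩, hw⟩ := hg
    have hg0 : ∀ j, j ∉ Finset.Icc 2 N → g j = 0 := by
      intro j hj; by_contra h; exact hj (hsupp j h)
    have hgle : ∀ j, g j ≤ n := by
      intro j
      by_cases hj : j ∈ Finset.Icc 2 N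
      · exact le_trans (le_trans (Finset.single_le_sum (fun _ _ => Nat.zero_le _) hj) hsum.le) hkn
      · rw [hg0 j hj]; exact Nat.zero_le _
    have hghigh : ∀ j, n + 1 < j → g j = 0 := by
      intro j hjn
      by_contra h0
      have hj' : j ∈ Finset.Icc 2 N := hsupp j h0
      have e1 : (j * g j) + ∑ j' ∈ (Finset.Icc 2 N).erase j, j' * g j'
          = ∑ j' ∈ Finset.Icc 2 N, j' * g j' :=
        Finset.add_sum_erase _ (fun x => x * g x) hj'
      have e2 : g j + ∑ j' ∈ (Finset.Icc 2 N).erase j, g j'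
          = ∑ j' ∈ Finset.Icc 2 N, g j' :=
        Finset.add_sum_erase _ g hj'
      rw [hw] at e1
      rw [show (Finset.Icc 2 N).sum g = k from hsum] at e2
      have e3 : 2 * ∑ j' ∈ (Finset.Icc 2 N).erase j, g j'
          ≤ ∑ j' ∈ (Finset.Icc 2 N).erase j, j' * g j' := by
        rw [Finset.mul_sum]
        refine Finset.sum_le_sum fun j' hj'' => ?_
        have := (Finset.mem_Icc.1 (Finset.mem_of_mem_erase hj'')).1
        exact Nat.mul_le_mul_right _ this
      have e4 : (n + 2) * g j ≤ j * g j := Nat.mul_le_mul_right _ (by omega)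
      have e5 : (n + 2) * g j = n * g j + 2 * g j := by ring
      have e6 : n ≤ n * g j := Nat.le_mul_of_pos_right n (Nat.pos_of_ne_zero h0)
      omega
    funext j
    dsimp only
    split_ifs with h1 h2
    · rw [show j - 1 + 1 = j by omega]
      exact min_eq_left (hgle j)
    · exact (hghigh j (by omega)).symm
    · exact (hg0 j (by simp [Finset.mem_Icc]; omega)).symm
  · -- term equality
    intro ℓ hℓ
    rw [Finset.mem_filter] at hℓ
    obtain ⟨-, h0, hw, hs⟩ := hℓ
    set L : ℕ → ℕ := fun i => if h : i < n + 1 then (ℓ ⟨i, h⟩ : ℕ) else 0 with hLdef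
    have hL0 : L 0 = 0 := by simp [hLdef, h0]
    have hLhigh : ∀ i, n < i → L i = 0 := fun i hi => by simp [hLdef]; omega
    have hLval : ∀ i : Fin (n + 1), L (i : ℕ) = (ℓ i : ℕ) := fun i => by
      simp [hLdef, i.isLt]; intro h; have := i.isLt; omega
    set fw : ℕ → ℕ := fun j => if 1 ≤ j then (if h : j - 1 < n + 1 then (ℓ ⟨j - 1, h⟩ : ℕ) else 0) else 0 with hfwdef
    have hfwL : ∀ j, fw j = if 1 ≤ j then L (j - 1) else 0 := fun j => rfl
    -- sum of fw over Icc is k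
    have hfwsum : ∑ j ∈ Finset.Icc 2 N, fw j = k := by
      rw [Finset.sum_congr rfl fun j _ => hfwL j,
        transfer_sum n N hnN L hL0 hLhigh (fun _ m => m) (fun _ => rfl),
        ← Fin.sum_univ_eq_sum_range (fun i => L i) (n + 1),
        Finset.sum_congr rfl fun i _ => hLval i, hs]
    -- factorial product transfer
    have hprod1 : ∏ j ∈ Finset.Icc 2 N, ((fw j).factorial : ℝ)
        = ∏ i : Fin (n + 1), ((ℓ i : ℕ).factorial : ℝ) := by
      rw [Finset.prod_congr rfl fun j _ => by rw [hfwL j],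
        transfer_prod n N hnN L hL0 hLhigh (fun _ m => (m.factorial : ℝ)) (fun _ => by simp),
        ← Fin.prod_univ_eq_prod_range (fun i => ((L i).factorial : ℝ)) (n + 1)]
      exact Finset.prod_congr rfl fun i _ => by rw [hLval i]
    have hprod2 : ∏ j ∈ Finset.Icc 2 N, (1 / (j.factorial : ℝ)) ^ (fw j)
        = ∏ i : Fin (n + 1), (1 / (((i : ℕ) + 1).factorial : ℝ)) ^ (ℓ i : ℕ) := by
      rw [Finset.prod_congr rfl fun j _ => by rw [hfwL j],
        transfer_prod n N hnN L hL0 hLhigh (fun j m => (1 / (j.factorial : ℝ)) ^ m)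
          (fun _ => pow_zero _),
        ← Fin.prod_univ_eq_prod_range (fun i => (1 / ((i + 1).factorial : ℝ)) ^ (L i)) (n + 1)]
      exact Finset.prod_congr rfl fun i _ => by rw [hLval i]
    -- bellB product rewriting
    have hbp : ∏ i : Fin (n + 1), ((fun i : ℕ => 1 / ((i : ℝ) + 1)) (i : ℕ) / (((i : ℕ).factorial : ℝ))) ^ (ℓ i : ℕ)
        = ∏ i : Fin (n + 1), (1 / (((i : ℕ) + 1).factorial : ℝ)) ^ (ℓ i : ℕ) := by
      refine Finset.prod_congr rfl fun i _ => ?_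
      congr 1
      rw [Nat.factorial_succ]
      have h1 : ((i : ℕ) : ℝ) + 1 ≠ 0 := by positivity
      have h2 : (((i : ℕ).factorial : ℕ) : ℝ) ≠ 0 := by
        exact_mod_cast (i : ℕ).factorial_ne_zero
      field_simp
      push_cast; ring
    -- multinomial
    have hmult : (Nat.multinomial (Finset.Icc 2 N) fw : ℝ)
        * ∏ j ∈ Finset.Icc 2 N, ((fw j).factorial : ℝ) = (k.factorial : ℝ) := by
      rw [← Nat.cast_prod, ← Nat.cast_mul, mul_comm (Nat.multinomial (Finset.Icc 2 N) fw),
        Nat.multinomial_spec, hfwsum]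
    have hne : ∏ i : Fin (n + 1), ((ℓ i : ℕ).factorial : ℝ) ≠ 0 := by
      refine Finset.prod_ne_zero_iff.2 fun i _ => ?_
      exact_mod_cast (ℓ i : ℕ).factorial_ne_zero
    have hkne : (k.factorial : ℝ) ≠ 0 := by exact_mod_cast k.factorial_ne_zero
    rw [hbp]
    rw [hprod1] at hmult
    have hmult' : (Nat.multinomial (Finset.Icc 2 N) fw : ℝ)
        = (k.factorial : ℝ) / ∏ i : Fin (n + 1), ((ℓ i : ℕ).factorial : ℝ) := by
      field_simp at hmult ⊢
      linarith [hmult]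
    rw [hmult', hprod2]
    field_simp
    try ring


end Aux


theorem stmt_1 (n k : ℕ) (hk : 1 ≤ k) (hkn : k ≤ n) :
    bellB n k (fun i => 1 / ((i : ℝ) + 1)) =
      ((n.factorial : ℝ) / ((n + k).factorial : ℝ)) *
        ∑ i ∈ Finset.range (k + 1),
          (-1 : ℝ) ^ (k - i) * ((n + k).choose (k - i)) * stirlingS (n + i) i := by
  rw [bridge n k hk hkn, ← coeff_Ptr_pow, ← key_trunc (n + k) k (by omega), coeff_G_pow,
    Finset.mul_sum, Finset.mul_sum]
  refine Finset.sum_congr rfl fun i hi => ?_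
  rw [Finset.mem_range] at hi
  have hik : i ≤ k := by omega
  have eN : (n + k).choose (k - i) * (k.factorial * (n + i).factorial)
      = k.choose i * i.factorial * (n + k).factorial := by
    have h1 : k.choose i * i.factorial * (k - i).factorial = k.factorial :=
      Nat.choose_mul_factorial_mul_factorial hik
    have h2 : (n + k).choose (k - i) * (k - i).factorial * (n + k - (k - i)).factorial
        = (n + k).factorial := Nat.choose_mul_factorial_mul_factorial (by omega)
    rw [show n + k - (k - i) = n + i by omega] at h2
    refine Nat.eq_of_mul_eq_mul_right (Nat.factorial_pos (k - i)) ?_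
    calc (n + k).choose (k - i) * (k.factorial * (n + i).factorial) * (k - i).factorial
          = ((n + k).choose (k - i) * (k - i).factorial * (n + i).factorial) * k.factorial := by
            ring
        _ = (n + k).factorial * k.factorial := by rw [h2]
        _ = (k.choose i * i.factorial * (k - i).factorial) * (n + k).factorial := by
            rw [h1]; ring
        _ = k.choose i * i.factorial * (n + k).factorial * (k - i).factorial := by ring
  have eR : ((n + k).choose (k - i) : ℝ) * ((k.factorial : ℝ) * ((n + i).factorial : ℝ))
      = (k.choose i : ℝ) * (i.factorial : ℝ) * ((n + k).factorial : ℝ) := by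
    exact_mod_cast congrArg (Nat.cast (R := ℝ)) eN
  have hk0 : (k.factorial : ℝ) ≠ 0 := by exact_mod_cast k.factorial_ne_zero
  have hni0 : ((n + i).factorial : ℝ) ≠ 0 := by exact_mod_cast (n + i).factorial_ne_zero
  have hnk0 : ((n + k).factorial : ℝ) ≠ 0 := by exact_mod_cast (n + k).factorial_ne_zero
  field_simp
  linear_combination (-stirlingS (n + i) i) * eR
end

section
/- For all integers n ≥ k ≥ 1, B_{n,k}(1/2, 1/3, …, 1/(n-k+2)) = n! · ∑_{ℓ=0}^{k} [(-1)^{k-ℓ} / ((k-ℓ)! · (n+ℓ)!)] · S(n+ℓ, ℓ), where S denotes the Stirling numbers of the second kind. -/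
open Finset

open PowerSeries


def toL (n : ℕ) (ℓ : Fin (n + 1) → Fin (n + 1)) : ℕ → ℕ :=
  fun m => if h : m < n + 1 then (ℓ ⟨m, h⟩ : ℕ) else 0

def Phi (n : ℕ) (L : ℕ → ℕ) : ℕ → ℕ :=
  fun j => if 2 ≤ j ∧ j ≤ n + 1 then L (j - 1) else 0

lemma shift_sum {M : Type*} [AddCommMonoid M] (n K : ℕ) (hK : n + 1 ≤ K) (L : ℕ → ℕ)
    (hL0 : L 0 = 0) (F : ℕ → ℕ → M) (hF : ∀ j, F j 0 = 0) :
    ∑ j ∈ Finset.Icc 2 K, F j (Phi n L j) = ∑ m ∈ Finset.range (n + 1), F (m + 1) (L m) := by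
  have hsub : Finset.Icc 2 (n + 1) ⊆ Finset.Icc 2 K := by
    apply Finset.Icc_subset_Icc le_rfl hK
  rw [← Finset.sum_subset hsub]
  · have himg : Finset.Icc 2 (n + 1) = (Finset.Icc 1 n).image (· + 1) := by
      rw [Finset.image_add_right_Icc]
    rw [himg, Finset.sum_image (by intro a _ b _ h; simp only at h; omega)]
    have h1 : ∀ m ∈ Finset.Icc 1 n, F (m + 1) (Phi n L (m + 1)) = F (m + 1) (L m) := by
      intro m hm
      rw [Finset.mem_Icc] at hm
      have : 2 ≤ m + 1 ∧ m + 1 ≤ n + 1 := by omega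
      rw [Phi, if_pos this, Nat.add_sub_cancel]
    rw [Finset.sum_congr rfl h1]
    have hr : Finset.range (n + 1) = insert 0 (Finset.Icc 1 n) := by
      ext m; simp only [Finset.mem_range, Finset.mem_insert, Finset.mem_Icc]; omega
    rw [hr, Finset.sum_insert (by simp), hL0, hF, zero_add]
  · intro j hj hj'
    rw [Finset.mem_Icc] at hj hj'
    have : ¬(2 ≤ j ∧ j ≤ n + 1) := by omega
    rw [Phi]; simp only [this, if_false]; exact hF j

lemma shift_prod {M : Type*} [CommMonoid M] (n K : ℕ) (hK : n + 1 ≤ K) (L : ℕ → ℕ)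
    (hL0 : L 0 = 0) (F : ℕ → ℕ → M) (hF : ∀ j, F j 0 = 1) :
    ∏ j ∈ Finset.Icc 2 K, F j (Phi n L j) = ∏ m ∈ Finset.range (n + 1), F (m + 1) (L m) := by
  have hsub : Finset.Icc 2 (n + 1) ⊆ Finset.Icc 2 K := by
    apply Finset.Icc_subset_Icc le_rfl hK
  rw [← Finset.prod_subset hsub]
  · have himg : Finset.Icc 2 (n + 1) = (Finset.Icc 1 n).image (· + 1) := by
      rw [Finset.image_add_right_Icc]
    rw [himg, Finset.prod_image (by intro a _ b _ h; simp only at h; omega)]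
    have h1 : ∀ m ∈ Finset.Icc 1 n, F (m + 1) (Phi n L (m + 1)) = F (m + 1) (L m) := by
      intro m hm
      rw [Finset.mem_Icc] at hm
      have : 2 ≤ m + 1 ∧ m + 1 ≤ n + 1 := by omega
      rw [Phi, if_pos this, Nat.add_sub_cancel]
    rw [Finset.prod_congr rfl h1]
    have hr : Finset.range (n + 1) = insert 0 (Finset.Icc 1 n) := by
      ext m; simp only [Finset.mem_range, Finset.mem_insert, Finset.mem_Icc]; omega
    rw [hr, Finset.prod_insert (by simp), hL0, hF, one_mul]
  · intro j hj hj'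
    rw [Finset.mem_Icc] at hj hj'
    have : ¬(2 ≤ j ∧ j ≤ n + 1) := by omega
    rw [Phi]; simp only [this, if_false]; exact hF j

lemma fin_sum_toL {M : Type*} [AddCommMonoid M] (n : ℕ) (ℓ : Fin (n + 1) → Fin (n + 1))
    (G : ℕ → ℕ → M) :
    ∑ i : Fin (n + 1), G (i : ℕ) (ℓ i : ℕ) = ∑ m ∈ Finset.range (n + 1), G m (toL n ℓ m) := by
  rw [← Fin.sum_univ_eq_sum_range (fun m => G m (toL n ℓ m)) (n + 1)]
  refine Finset.sum_congr rfl fun i _ => ?_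
  simp [toL, i.isLt]

lemma fin_prod_toL {M : Type*} [CommMonoid M] (n : ℕ) (ℓ : Fin (n + 1) → Fin (n + 1))
    (G : ℕ → ℕ → M) :
    ∏ i : Fin (n + 1), G (i : ℕ) (ℓ i : ℕ) = ∏ m ∈ Finset.range (n + 1), G m (toL n ℓ m) := by
  rw [← Fin.prod_univ_eq_prod_range (fun m => G m (toL n ℓ m)) (n + 1)]
  refine Finset.prod_congr rfl fun i _ => ?_
  simp [toL, i.isLt]


lemma back_repr (n k : ℕ) (hk : 1 ≤ k) (hkn : k ≤ n) (g : ℕ → ℕ)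
    (hsum : ∑ j ∈ Finset.Icc 2 (n + k), g j = k)
    (hsupp : ∀ j, g j ≠ 0 → j ∈ Finset.Icc 2 (n + k))
    (hwt : ∑ j ∈ Finset.Icc 2 (n + k), j * g j = n + k) :
    (∀ j, g j ≤ k) ∧
      g = Phi n (toL n (fun i : Fin (n + 1) =>
        (⟨min (g ((i : ℕ) + 1)) n, by omega⟩ : Fin (n + 1)))) := by
  have hgle : ∀ j, g j ≤ k := by
    intro j
    by_cases hj : j ∈ Finset.Icc 2 (n + k)
    · rw [← hsum]; exact Finset.single_le_sum (fun i _ => Nat.zero_le _) hj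
    · by_cases hgj : g j = 0
      · omega
      · exact absurd (hsupp j hgj) hj
  have hbig : ∀ j, n + 1 < j → g j = 0 := by
    intro j hj
    by_contra hne
    have hjs : j ∈ Finset.Icc 2 (n + k) := hsupp j hne
    have h1 : ∀ i ∈ Finset.Icc 2 (n + k), i * g i = (i - 2) * g i + 2 * g i := by
      intro i hi
      rw [Finset.mem_Icc] at hi
      have h2 : i = i - 2 + 2 := by omega
      calc i * g i = (i - 2 + 2) * g i := by rw [← h2]
        _ = (i - 2) * g i + 2 * g i := by ring
    rw [Finset.sum_congr rfl h1, Finset.sum_add_distrib, ← Finset.mul_sum, hsum] at hwt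
    have h2 : (j - 2) * g j ≤ ∑ i ∈ Finset.Icc 2 (n + k), (i - 2) * g i :=
      Finset.single_le_sum (f := fun i => (i - 2) * g i) (fun i _ => Nat.zero_le _) hjs
    have h3 : 1 ≤ g j := by omega
    have h4 : n ≤ j - 2 := by omega
    have h5 : n * 1 ≤ (j - 2) * g j := Nat.mul_le_mul h4 h3
    have h6 : n ≤ ∑ i ∈ Finset.Icc 2 (n + k), (i - 2) * g i := le_trans (by omega) h2
    omega
  refine ⟨hgle, ?_⟩
  funext j
  simp only [Phi, toL]
  by_cases hc : 2 ≤ j ∧ j ≤ n + 1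
  · rw [if_pos hc, dif_pos (by omega : j - 1 < n + 1)]
    have h7 : j - 1 + 1 = j := by omega
    simp only [Fin.val_mk, h7]
    have : min (g j) n = g j := min_eq_left (le_trans (hgle j) hkn)
    omega
  · rw [if_neg hc]
    by_cases h2 : j < 2
    · have hnotin : j ∉ Finset.Icc 2 (n + k) := by rw [Finset.mem_Icc]; omega
      by_cases hgj : g j = 0
      · exact hgj
      · exact absurd (hsupp j hgj) hnotin
    · exact hbig j (by omega)

lemma bellB_eq (n k : ℕ) (hk : 1 ≤ k) (hkn : k ≤ n) :
    (k.factorial : ℝ) * bellB n k (fun i => 1 / ((i : ℝ) + 1)) =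
      (n.factorial : ℝ) *
      ∑ g ∈ Finset.piAntidiag (Finset.Icc 2 (n + k)) k,
        if (∑ j ∈ Finset.Icc 2 (n + k), j * g j) = n + k then
          (Nat.multinomial (Finset.Icc 2 (n + k)) g : ℝ) *
            ∏ j ∈ Finset.Icc 2 (n + k), (1 / (j.factorial : ℝ)) ^ g j
        else 0 := by
  classical
  have hK : n + 1 ≤ n + k := by omega
  rw [bellB, Finset.mul_sum, Finset.mul_sum]
  simp only [mul_ite, mul_zero]
  rw [← Finset.sum_filter, ← Finset.sum_filter]
  refine Finset.sum_nbij' (fun ℓ => Phi n (toL n ℓ))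
    (fun g => fun i : Fin (n + 1) => (⟨min (g ((i : ℕ) + 1)) n, by omega⟩ : Fin (n + 1)))
    ?_ ?_ ?_ ?_ ?_
  · -- forward membership
    intro ℓ hℓ
    rw [Finset.mem_filter] at hℓ
    obtain ⟨-, h0, hwt, hsum⟩ := hℓ
    have hL0 : toL n ℓ 0 = 0 := by simp [toL, h0]
    have hA : ∑ j ∈ Finset.Icc 2 (n + k), Phi n (toL n ℓ) j = k := by
      rw [shift_sum n (n + k) hK _ hL0 (fun j c => c) (fun j => rfl)]
      rw [← fin_sum_toL n ℓ (fun m c => c)]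
      exact hsum
    have hB : ∑ j ∈ Finset.Icc 2 (n + k), j * Phi n (toL n ℓ) j = n + k := by
      rw [shift_sum n (n + k) hK _ hL0 (fun j c => j * c) (fun j => by simp)]
      have heq : ∑ m ∈ Finset.range (n + 1), (m + 1) * toL n ℓ m =
          (∑ m ∈ Finset.range (n + 1), m * toL n ℓ m) +
            ∑ m ∈ Finset.range (n + 1), toL n ℓ m := by
        rw [← Finset.sum_add_distrib]
        exact Finset.sum_congr rfl fun m _ => by ring
      rw [heq, ← fin_sum_toL n ℓ (fun m c => m * c), ← fin_sum_toL n ℓ (fun m c => c),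
        hwt, hsum]
    rw [Finset.mem_filter, Finset.mem_piAntidiag]
    refine ⟨⟨hA, ?_⟩, hB⟩
    intro j hj
    simp only [Phi] at hj
    by_cases hc : 2 ≤ j ∧ j ≤ n + 1
    · rw [Finset.mem_Icc]; omega
    · rw [if_neg hc] at hj; exact absurd rfl hj
  · -- backward membership
    intro g hg
    rw [Finset.mem_filter, Finset.mem_piAntidiag] at hg
    obtain ⟨⟨hsum, hsupp⟩, hwt⟩ := hg
    obtain ⟨hgle, hPsi⟩ := back_repr n k hk hkn g hsum hsupp hwt
    set ℓ : Fin (n + 1) → Fin (n + 1) := fun i =>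
      (⟨min (g ((i : ℕ) + 1)) n, by omega⟩ : Fin (n + 1)) with hℓ
    have hg1 : g 1 = 0 := by
      have h1 : (1 : ℕ) ∉ Finset.Icc 2 (n + k) := by rw [Finset.mem_Icc]; omega
      by_cases hgj : g 1 = 0
      · exact hgj
      · exact absurd (hsupp 1 hgj) h1
    have hL0 : toL n ℓ 0 = 0 := by simp [toL, hℓ, hg1]
    have hA : ∑ m ∈ Finset.range (n + 1), toL n ℓ m = k := by
      have h := shift_sum n (n + k) hK (toL n ℓ) hL0 (fun j c => c) (fun j => rfl)
      rw [← hPsi] at h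
      rw [← h]; exact hsum
    have hB : ∑ m ∈ Finset.range (n + 1), m * toL n ℓ m = n := by
      have h := shift_sum n (n + k) hK (toL n ℓ) hL0 (fun j c => j * c) (fun j => by simp)
      rw [← hPsi] at h
      have heq : ∑ m ∈ Finset.range (n + 1), (m + 1) * toL n ℓ m =
          (∑ m ∈ Finset.range (n + 1), m * toL n ℓ m) +
            ∑ m ∈ Finset.range (n + 1), toL n ℓ m := by
        rw [← Finset.sum_add_distrib]
        exact Finset.sum_congr rfl fun m _ => by ring
      rw [heq, hA, hwt] at h
      omega
    rw [Finset.mem_filter]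
    refine ⟨Finset.mem_univ _, ?_, ?_, ?_⟩
    · show (ℓ 0 : ℕ) = 0
      simp [hℓ, hg1]
    · rw [fin_sum_toL n ℓ (fun m c => m * c)]; exact hB
    · rw [fin_sum_toL n ℓ (fun m c => c)]; exact hA
  · -- left inverse
    intro ℓ hℓ
    rw [Finset.mem_filter] at hℓ
    obtain ⟨-, h0, hwt, hsum⟩ := hℓ
    funext i
    apply Fin.ext
    simp only [Fin.val_mk]
    by_cases hi : (i : ℕ) = 0
    · have hi0 : i = 0 := Fin.ext hi
      simp only [Phi, hi, hi0]
      norm_num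
      exact h0.symm
    · have hc : 2 ≤ (i : ℕ) + 1 ∧ (i : ℕ) + 1 ≤ n + 1 := by
        have := i.isLt; omega
      simp only [Phi, if_pos hc, Nat.add_sub_cancel, toL, dif_pos i.isLt]
      have hle : (ℓ i : ℕ) ≤ n := by have := (ℓ i).isLt; omega
      simp [Fin.eta, min_eq_left hle]
  · -- right inverse
    intro g hg
    rw [Finset.mem_filter, Finset.mem_piAntidiag] at hg
    obtain ⟨⟨hsum, hsupp⟩, hwt⟩ := hg
    obtain ⟨-, hPsi⟩ := back_repr n k hk hkn g hsum hsupp hwt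
    exact hPsi.symm
  · -- values agree
    intro ℓ hℓ
    rw [Finset.mem_filter] at hℓ
    obtain ⟨-, h0, hwt, hsum⟩ := hℓ
    have hL0 : toL n ℓ 0 = 0 := by simp [toL, h0]
    have hA : ∑ j ∈ Finset.Icc 2 (n + k), Phi n (toL n ℓ) j = k := by
      rw [shift_sum n (n + k) hK _ hL0 (fun j c => c) (fun j => rfl)]
      rw [← fin_sum_toL n ℓ (fun m c => c)]
      exact hsum
    have hP : ∏ i : Fin (n + 1), (((ℓ i : ℕ).factorial : ℝ)) =
        ∏ j ∈ Finset.Icc 2 (n + k), (((Phi n (toL n ℓ) j).factorial : ℝ)) := by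
      rw [shift_prod n (n + k) hK _ hL0 (fun j c => ((c.factorial : ℝ))) (fun j => by simp)]
      rw [fin_prod_toL n ℓ (fun m c => ((c.factorial : ℝ)))]
    have hQ : ∏ i : Fin (n + 1), ((1 / (((i : ℕ) : ℝ) + 1)) / (((i : ℕ).factorial : ℝ))) ^ (ℓ i : ℕ) =
        ∏ j ∈ Finset.Icc 2 (n + k), (1 / (j.factorial : ℝ)) ^ (Phi n (toL n ℓ) j) := by
      rw [shift_prod n (n + k) hK _ hL0 (fun j c => (1 / (j.factorial : ℝ)) ^ c) (fun j => by simp)]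
      rw [fin_prod_toL n ℓ (fun m c => ((1 / ((m : ℝ) + 1)) / ((m.factorial : ℝ))) ^ c)]
      refine Finset.prod_congr rfl fun m _ => ?_
      have hbase : (1 / ((m : ℝ) + 1)) / ((m.factorial : ℝ)) = 1 / (((m + 1).factorial : ℝ)) := by
        rw [Nat.factorial_succ]
        push_cast
        have h1 : ((m : ℝ) + 1) ≠ 0 := by positivity
        have h2 : ((m.factorial : ℝ)) ≠ 0 := Nat.cast_ne_zero.mpr (Nat.factorial_ne_zero _)
        field_simp
      rw [hbase]
    have hmult := Nat.multinomial_spec (Finset.Icc 2 (n + k)) (Phi n (toL n ℓ))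
    rw [hA] at hmult
    have hmultR : (∏ j ∈ Finset.Icc 2 (n + k), (((Phi n (toL n ℓ) j).factorial : ℝ))) *
        ((Nat.multinomial (Finset.Icc 2 (n + k)) (Phi n (toL n ℓ)) : ℝ)) = (k.factorial : ℝ) := by
      exact_mod_cast congrArg (Nat.cast : ℕ → ℝ) hmult
    have hPne : (∏ j ∈ Finset.Icc 2 (n + k), (((Phi n (toL n ℓ) j).factorial : ℝ))) ≠ 0 := by
      apply Finset.prod_ne_zero_iff.mpr
      intro j _
      exact Nat.cast_ne_zero.mpr (Nat.factorial_ne_zero _)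
    rw [hP, hQ]
    set P := ∏ j ∈ Finset.Icc 2 (n + k), (((Phi n (toL n ℓ) j).factorial : ℝ)) with hPdef
    set Q := ∏ j ∈ Finset.Icc 2 (n + k), (1 / (j.factorial : ℝ)) ^ (Phi n (toL n ℓ) j) with hQdef
    have hm : ((Nat.multinomial (Finset.Icc 2 (n + k)) (Phi n (toL n ℓ))) : ℝ) =
        (k.factorial : ℝ) / P := by
      rw [eq_div_iff hPne]; linarith [hmultR]
    rw [hm]
    ring



noncomputable def myF : ℝ⟦X⟧ := PowerSeries.exp ℝ - 1 - PowerSeries.X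

noncomputable def myG (N : ℕ) : ℝ⟦X⟧ :=
  ∑ j ∈ Finset.Icc 2 N, PowerSeries.C (R := ℝ) (1 / (j.factorial : ℝ)) * PowerSeries.X ^ j

lemma coeff_myF (m : ℕ) :
    (PowerSeries.coeff (R := ℝ) m) myF = if 2 ≤ m then (1 / (m.factorial : ℝ)) else 0 := by
  simp only [myF, map_sub, coeff_exp, PowerSeries.coeff_one, PowerSeries.coeff_X]
  match m with
  | 0 => norm_num
  | 1 => norm_num
  | (m + 2) =>
    have : ¬ (m + 2 = 0) := by omega
    have h1 : ¬ (m + 2 = 1) := by omega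
    simp [this, h1, eq_ratCast]

lemma coeff_myG (N m : ℕ) :
    (PowerSeries.coeff (R := ℝ) m) (myG N) =
      if m ∈ Finset.Icc 2 N then (1 / (m.factorial : ℝ)) else 0 := by
  simp only [myG, map_sum, PowerSeries.coeff_C_mul_X_pow]
  rw [Finset.sum_ite_eq (Finset.Icc 2 N) m (fun j => (1 / (j.factorial : ℝ)))]

lemma coeff_pow_trunc (N k : ℕ) :
    (PowerSeries.coeff (R := ℝ) N) (myF ^ k) = (PowerSeries.coeff (R := ℝ) N) (myG N ^ k) := by
  obtain ⟨H, hH⟩ := sub_dvd_pow_sub_pow myF (myG N) k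
  have key : (PowerSeries.coeff (R := ℝ) N) (myF ^ k - myG N ^ k) = 0 := by
    rw [hH, PowerSeries.coeff_mul]
    refine Finset.sum_eq_zero fun p hp => ?_
    have hp1 : p.1 ≤ N := by
      have := Finset.HasAntidiagonal.antidiagonal.fst_le hp
      omega
    have : (PowerSeries.coeff (R := ℝ) p.1) (myF - myG N) = 0 := by
      rw [map_sub, coeff_myF, coeff_myG]
      have : p.1 ∈ Finset.Icc 2 N ↔ 2 ≤ p.1 := by rw [Finset.mem_Icc]; omega
      by_cases h : 2 ≤ p.1 <;> simp [h, this]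
    rw [this, zero_mul]
  rw [map_sub] at key
  linarith

lemma coeff_exp_sub_one_pow_s5 (m l : ℕ) :
    (PowerSeries.coeff (R := ℝ) m) ((PowerSeries.exp ℝ - 1) ^ l) =
      (1 / (m.factorial : ℝ)) * ∑ j ∈ Finset.range (l + 1),
        (-1 : ℝ) ^ (l - j) * (l.choose j) * (j : ℝ) ^ m := by
  have h0 : PowerSeries.exp ℝ - 1 = PowerSeries.exp ℝ + (-1) := by ring
  rw [h0, add_pow, map_sum, Finset.mul_sum]
  refine Finset.sum_congr rfl fun j hj => ?_
  have h1 : (PowerSeries.exp ℝ)^j * (-1 : ℝ⟦X⟧)^(l-j) * (l.choose j : ℝ⟦X⟧)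
      = PowerSeries.C (R := ℝ) ((-1 : ℝ)^(l-j) * (l.choose j : ℝ)) * (PowerSeries.exp ℝ)^j := by
    rw [map_mul, map_pow, map_neg, map_one, map_natCast]; ring
  rw [h1, PowerSeries.coeff_C_mul, PowerSeries.exp_pow_eq_rescale_exp,
    PowerSeries.coeff_rescale, PowerSeries.coeff_exp]
  have : ((algebraMap ℚ ℝ) (1 / (m.factorial : ℚ))) = 1 / (m.factorial : ℝ) := by
    simp [eq_ratCast]
  rw [this]; ring

lemma coeff_F_pow (n k : ℕ) (hkn : k ≤ n) :
    (PowerSeries.coeff (R := ℝ) (n + k)) (myF ^ k) =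
      (k.factorial : ℝ) *
        ∑ l ∈ Finset.range (k + 1),
          (-1 : ℝ) ^ (k - l) / (((k - l).factorial : ℝ) * ((n + l).factorial : ℝ)) *
            stirlingS (n + l) l := by
  have h0 : myF = (PowerSeries.exp ℝ - 1) + (-PowerSeries.X) := by rw [myF]; ring
  rw [h0, add_pow, map_sum, Finset.mul_sum]
  refine Finset.sum_congr rfl fun l hl => ?_
  rw [Finset.mem_range] at hl
  have hlk : l ≤ k := by omega
  have h1 : (PowerSeries.exp ℝ - 1)^l * (-PowerSeries.X : ℝ⟦X⟧)^(k-l) * (k.choose l : ℝ⟦X⟧)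
      = PowerSeries.C (R := ℝ) ((-1 : ℝ)^(k-l) * (k.choose l : ℝ)) *
        ((PowerSeries.exp ℝ - 1)^l * PowerSeries.X ^ (k-l)) := by
    rw [map_mul, map_pow, map_neg, map_one, map_natCast, neg_pow]; ring
  have h2 : n + k = (n + l) + (k - l) := by omega
  rw [h1, PowerSeries.coeff_C_mul, h2, PowerSeries.coeff_mul_X_pow,
    coeff_exp_sub_one_pow_s5]
  rw [stirlingS]
  have hfac : ((k.choose l : ℝ)) * (l.factorial : ℝ) * ((k-l).factorial : ℝ)
      = (k.factorial : ℝ) := by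
    exact_mod_cast congrArg (Nat.cast : ℕ → ℝ) (Nat.choose_mul_factorial_mul_factorial hlk)
  have hne1 : ((n+l).factorial : ℝ) ≠ 0 := Nat.cast_ne_zero.mpr (Nat.factorial_ne_zero _)
  have hne2 : ((k-l).factorial : ℝ) ≠ 0 := Nat.cast_ne_zero.mpr (Nat.factorial_ne_zero _)
  have hne3 : ((l).factorial : ℝ) ≠ 0 := Nat.cast_ne_zero.mpr (Nat.factorial_ne_zero _)
  set S := ∑ j ∈ Finset.range (l + 1), (-1 : ℝ) ^ (l - j) * (l.choose j) * (j : ℝ) ^ (n + l) with hS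
  field_simp
  linear_combination S * hfac

lemma coeff_G_pow_s5 (n k : ℕ) :
    (PowerSeries.coeff (R := ℝ) (n + k)) (myG (n + k) ^ k) =
      ∑ g ∈ Finset.piAntidiag (Finset.Icc 2 (n + k)) k,
        if (∑ j ∈ Finset.Icc 2 (n + k), j * g j) = n + k then
          (Nat.multinomial (Finset.Icc 2 (n + k)) g : ℝ) *
            ∏ j ∈ Finset.Icc 2 (n + k), (1 / (j.factorial : ℝ)) ^ g j
        else 0 := by
  rw [myG, Finset.sum_pow_eq_sum_piAntidiag, map_sum]
  refine Finset.sum_congr rfl fun g hg => ?_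
  have h1 : ∏ j ∈ Finset.Icc 2 (n + k), (PowerSeries.C (R := ℝ) (1 / (j.factorial : ℝ)) * PowerSeries.X ^ j) ^ g j
      = PowerSeries.C (R := ℝ) (∏ j ∈ Finset.Icc 2 (n + k), (1 / (j.factorial : ℝ)) ^ g j) *
        PowerSeries.X ^ (∑ j ∈ Finset.Icc 2 (n + k), j * g j) := by
    rw [map_prod, ← Finset.prod_pow_eq_pow_sum, ← Finset.prod_mul_distrib]
    refine Finset.prod_congr rfl fun j hj => ?_
    rw [mul_pow, ← map_pow, ← pow_mul]
  have h2 : ((Nat.multinomial (Finset.Icc 2 (n + k)) g : ℝ⟦X⟧))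
      = PowerSeries.C (R := ℝ) ((Nat.multinomial (Finset.Icc 2 (n + k)) g : ℝ)) := by
    rw [map_natCast]
  rw [h1, h2, ← mul_assoc, ← map_mul, PowerSeries.coeff_C_mul, PowerSeries.coeff_X_pow]
  by_cases h : (∑ j ∈ Finset.Icc 2 (n + k), j * g j) = n + k
  · rw [if_pos h, if_pos h.symm, mul_one]
  · rw [if_neg h, if_neg (fun hh => h hh.symm), mul_zero]

theorem stmt_5 (n k : ℕ) (hk : 1 ≤ k) (hkn : k ≤ n) :
    bellB n k (fun i => 1 / ((i : ℝ) + 1)) =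
      (n.factorial : ℝ) *
        ∑ l ∈ Finset.range (k + 1),
          (-1 : ℝ) ^ (k - l) / (((k - l).factorial : ℝ) * ((n + l).factorial : ℝ)) *
            stirlingS (n + l) l := by
  have h1 := coeff_F_pow n k hkn
  have h2 := coeff_pow_trunc (n + k) k
  have h3 := coeff_G_pow_s5 n k
  have h4 := bellB_eq n k hk hkn
  have hkf : (k.factorial : ℝ) ≠ 0 := Nat.cast_ne_zero.mpr k.factorial_ne_zero
  have : (k.factorial : ℝ) * bellB n k (fun i => 1 / ((i : ℝ) + 1)) =
      (k.factorial : ℝ) * ((n.factorial : ℝ) *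
        ∑ l ∈ Finset.range (k + 1),
          (-1 : ℝ) ^ (k - l) / (((k - l).factorial : ℝ) * ((n + l).factorial : ℝ)) *
            stirlingS (n + l) l) := by
    rw [h4, ← h3, ← h2, h1]; ring
  exact mul_left_cancel₀ hkf this
end
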